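/- The ideal $I = (x_1y_2-x_2y_1, x_2y_3-x_3y_2, x_3y_1-x_1y_3)$ in $k[x_1,x_2,x_3,y_1,y_2,y_3]$ is radical (equivalently, the ring $k[x_i,y_i]/I$ is reduced). -/

import Mathlib

open MvPolynomial

namespace MinorsRadical

variable (k : Type*) [Field k]

def Igen : Set (MvPolynomial (Fin 6) k) :=
  {X 0 * X 4 - X 1 * X 3, X 1 * X 5 - X 2 * X 4, X 2 * X 3 - X 0 * X 5}

noncomputable def I : Ideal (MvPolynomial (Fin 6) k) := Ideal.span (Igen k)

def xv (i : Fin 3) : Fin 6 := ⟨i, by omega⟩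
def yv (i : Fin 3) : Fin 6 := ⟨i + 3, by omega⟩

lemma xv_inj : Function.Injective xv := by decide
lemma xv_ne_yv (i j : Fin 3) : xv i ≠ yv j := by revert i j; decide

noncomputable def Mon (d : Fin 6 → ℕ) : MvPolynomial (Fin 6) k := ∏ i, X i ^ d i

def incr (d : Fin 6 → ℕ) (t : Fin 6) : Fin 6 → ℕ := Function.update d t (d t + 1)

lemma incr_apply (d : Fin 6 → ℕ) (t s : Fin 6) :
    incr d t s = if s = t then d s + 1 else d s := by
  by_cases h : s = t
  · subst h; simp [incr]
  · simp [incr, Function.update_of_ne h, h]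

lemma incr_self (d : Fin 6 → ℕ) (t : Fin 6) : incr d t t = d t + 1 := by simp [incr]

lemma incr_ne (d : Fin 6 → ℕ) {t s : Fin 6} (h : s ≠ t) : incr d t s = d s := by
  simp [incr, Function.update_of_ne h]

lemma Mon_incr (d : Fin 6 → ℕ) (t : Fin 6) : Mon k (incr d t) = X t * Mon k d := by
  unfold Mon
  rw [← Finset.mul_prod_erase Finset.univ _ (Finset.mem_univ t),
      ← Finset.mul_prod_erase Finset.univ (fun i => X i ^ d i) (Finset.mem_univ t)]
  rw [Finset.prod_congr rfl (fun s hs => by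
    rw [incr_ne _ (Finset.ne_of_mem_erase hs)])]
  rw [incr_self, pow_succ]
  ring

lemma exists_incr {d : Fin 6 → ℕ} {t : Fin 6} (h : 0 < d t) :
    ∃ e, d = incr e t ∧ ∀ s, e s = if s = t then d s - 1 else d s := by
  refine ⟨Function.update d t (d t - 1), ?_, ?_⟩
  · funext s
    by_cases hst : s = t
    · subst hst; simp [incr]; omega
    · simp [incr, Function.update_of_ne hst]
  · intro s
    by_cases hst : s = t
    · subst hst; simp
    · simp [Function.update_of_ne hst, hst]

lemma rel_mem (i j : Fin 3) : X (xv i) * X (yv j) - X (xv j) * X (yv i) ∈ I k := by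
  have h1 : (X 0 * X 4 - X 1 * X 3 : MvPolynomial (Fin 6) k) ∈ I k :=
    Ideal.subset_span (Or.inl rfl)
  have h2 : (X 1 * X 5 - X 2 * X 4 : MvPolynomial (Fin 6) k) ∈ I k :=
    Ideal.subset_span (Or.inr (Or.inl rfl))
  have h3 : (X 2 * X 3 - X 0 * X 5 : MvPolynomial (Fin 6) k) ∈ I k :=
    Ideal.subset_span (Or.inr (Or.inr rfl))
  have n1 : (X 1 * X 3 - X 0 * X 4 : MvPolynomial (Fin 6) k) ∈ I k := by
    have := (I k).neg_mem h1; rwa [neg_sub] at this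
  have n2 : (X 2 * X 4 - X 1 * X 5 : MvPolynomial (Fin 6) k) ∈ I k := by
    have := (I k).neg_mem h2; rwa [neg_sub] at this
  have n3 : (X 0 * X 5 - X 2 * X 3 : MvPolynomial (Fin 6) k) ∈ I k := by
    have := (I k).neg_mem h3; rwa [neg_sub] at this
  fin_cases i <;> fin_cases j <;>
    first
      | (rw [sub_self]; exact zero_mem _)
      | exact h1 | exact h2 | exact h3 | exact n1 | exact n2 | exact n3

/-- One straightening move: exchange an `x_j` and a `y_i` for an `x_i` and a `y_j`. -/
lemma move (d : Fin 6 → ℕ) (i j : Fin 3) (hij : i ≠ j)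
    (hxj : 0 < d (xv j)) (hyi : 0 < d (yv i)) :
    ∃ d'' : Fin 6 → ℕ, (Mon k d - Mon k d'' ∈ I k) ∧
      ∀ s, d'' s = if s = xv i then d s + 1 else if s = yv j then d s + 1
        else if s = xv j then d s - 1 else if s = yv i then d s - 1 else d s := by
  obtain ⟨e, he, hev⟩ := exists_incr hxj
  have hey : 0 < e (yv i) := by
    rw [hev, if_neg (show yv i ≠ xv j from Ne.symm (xv_ne_yv j i))]; exact hyi
  obtain ⟨f, hf, hfv⟩ := exists_incr hey
  have hxx : xv i ≠ xv j := fun h => hij (xv_inj h)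
  have hyy : yv j ≠ yv i := fun h => hij.symm (by
    have : (j : ℕ) + 3 = (i : ℕ) + 3 := congrArg Fin.val h
    exact Fin.ext (by omega))
  refine ⟨incr (incr f (yv j)) (xv i), ?_, ?_⟩
  · rw [he, hf, Mon_incr, Mon_incr, Mon_incr, Mon_incr]
    have : X (xv j) * (X (yv i) * Mon k f) - X (xv i) * (X (yv j) * Mon k f)
        = (X (xv j) * X (yv i) - X (xv i) * X (yv j)) * Mon k f := by ring
    rw [this]
    exact Ideal.mul_mem_right _ _ (rel_mem k j i)
  · intro s
    by_cases h1 : s = xv i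
    · subst h1
      rw [if_pos rfl, incr_self, incr_ne _ (xv_ne_yv i j), hfv,
        if_neg (xv_ne_yv i i), hev, if_neg hxx]
    · rw [if_neg h1, incr_ne _ h1]
      by_cases h2 : s = yv j
      · subst h2
        rw [if_pos rfl, incr_self, hfv, if_neg hyy, hev,
          if_neg (show yv j ≠ xv j from Ne.symm (xv_ne_yv j j))]
      · rw [if_neg h2, incr_ne _ h2]
        by_cases h3 : s = xv j
        · subst h3
          rw [if_pos rfl, hfv, if_neg (xv_ne_yv j i), hev, if_pos rfl]
        · rw [if_neg h3]
          by_cases h4 : s = yv i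
          · subst h4
            rw [if_pos rfl, hfv, if_pos rfl, hev,
              if_neg (show yv i ≠ xv j from Ne.symm (xv_ne_yv j i))]
          · rw [if_neg h4, hfv, if_neg h4, hev, if_neg h3]


lemma yv_inj : Function.Injective yv := by decide
lemma yv_ne_xv (i j : Fin 3) : yv i ≠ xv j := Ne.symm (xv_ne_yv j i)

/-- matching invariants -/
def A (d d' : Fin 6 → ℕ) : Prop :=
  (∀ t : Fin 3, d (xv t) + d (yv t) = d' (xv t) + d' (yv t)) ∧
  d (xv 0) + d (xv 1) + d (xv 2) = d' (xv 0) + d' (xv 1) + d' (xv 2)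

lemma caseA (m : ℕ)
    (IH : ∀ e e' : Fin 6 → ℕ, e (xv 0) + e (xv 1) + e (xv 2) = m → A e e' →
      Mon k e - Mon k e' ∈ I k)
    (d d' : Fin 6 → ℕ) (i : Fin 3) (hdi : 0 < d (xv i)) (hdi' : 0 < d' (xv i))
    (hn : d (xv 0) + d (xv 1) + d (xv 2) = m + 1) (hA : A d d') :
    Mon k d - Mon k d' ∈ I k := by
  obtain ⟨e, he, hev⟩ := exists_incr hdi
  obtain ⟨e', he', he'v⟩ := exists_incr hdi'
  rw [he, he', Mon_incr, Mon_incr, ← mul_sub]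
  refine Ideal.mul_mem_left _ _ (IH e e' ?_ ⟨?_, ?_⟩)
  · have h0 := hev (xv 0); have h1 := hev (xv 1); have h2 := hev (xv 2)
    fin_cases i <;> simp [xv] at h0 h1 h2 hdi hn ⊢ <;> omega
  · intro t
    have hxy := hA.1 t
    by_cases ht : t = i
    · subst ht
      rw [hev (xv t), if_pos rfl, hev (yv t), if_neg (yv_ne_xv t t),
        he'v (xv t), if_pos rfl, he'v (yv t), if_neg (yv_ne_xv t t)]
      omega
    · have hne : xv t ≠ xv i := fun h => ht (xv_inj h)
      rw [hev (xv t), if_neg hne, hev (yv t), if_neg (yv_ne_xv t i),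
        he'v (xv t), if_neg hne, he'v (yv t), if_neg (yv_ne_xv t i)]
      omega
  · have h0 := hev (xv 0); have h1 := hev (xv 1); have h2 := hev (xv 2)
    have h0' := he'v (xv 0); have h1' := he'v (xv 1); have h2' := he'v (xv 2)
    have hs := hA.2
    fin_cases i <;> simp [xv] at h0 h1 h2 h0' h1' h2' hdi hdi' hn hs ⊢ <;> omega

lemma exchange : ∀ n (d d' : Fin 6 → ℕ), d (xv 0) + d (xv 1) + d (xv 2) = n → A d d' →
    Mon k d - Mon k d' ∈ I k := by
  intro n
  induction n using Nat.strong_induction_on with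
  | _ n IH =>
    intro d d' hn hA
    rcases n with _ | m
    · -- all x-exponents vanish, so the monomials are equal
      have hd : ∀ t : Fin 3, d (xv t) = 0 := by
        intro t; fin_cases t <;> simp [xv] at hn ⊢ <;> omega
      have hd' : ∀ t : Fin 3, d' (xv t) = 0 := by
        have hs := hA.2
        intro t; fin_cases t <;> simp [xv] at hn hs ⊢ <;> omega
      have hdd : d = d' := by
        funext s
        have hc : (∃ t, s = xv t) ∨ (∃ t, s = yv t) := by
          revert s; decide
        rcases hc with ⟨t, rfl⟩ | ⟨t, rfl⟩
        · rw [hd t, hd' t]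
        · have := hA.1 t; have := hd t; have := hd' t; omega
      rw [hdd, sub_self]; exact zero_mem _
    · have IH' : ∀ e e' : Fin 6 → ℕ, e (xv 0) + e (xv 1) + e (xv 2) = m → A e e' →
          Mon k e - Mon k e' ∈ I k := fun e e' h1 h2 => IH m (Nat.lt_succ_self m) e e' h1 h2
      have key : ∀ i : Fin 3, 0 < d (xv i) → Mon k d - Mon k d' ∈ I k := by
        intro i hdi
        by_cases hdi' : 0 < d' (xv i)
        · exact caseA k m IH' d d' i hdi hdi' hn hA
        · push_neg at hdi'
          have hxyi := hA.1 i
          have hyi' : 0 < d' (yv i) := by omega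
          have hxj : ∃ j : Fin 3, 0 < d' (xv j) := by
            by_contra hc; push_neg at hc
            have hc0 := hc 0; have hc1 := hc 1; have hc2 := hc 2
            have hs := hA.2
            omega
          obtain ⟨j, hj⟩ := hxj
          have hij : i ≠ j := fun h => by rw [← h] at hj; omega
          obtain ⟨d'', hmem, hval⟩ := move k d' i j hij hj hyi'
          have hvxi : d'' (xv i) = d' (xv i) + 1 := by rw [hval, if_pos rfl]
          have h1 : Mon k d - Mon k d'' ∈ I k := by
            apply caseA k m IH' d d'' i hdi (by omega) hn
            constructor
            · intro t
              have hxyt := hA.1 t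
              by_cases hti : t = i
              · subst hti
                rw [hval (xv t), if_pos rfl, hval (yv t), if_neg (yv_ne_xv t t),
                  if_neg (fun h => hij (yv_inj h)), if_neg (yv_ne_xv t j), if_pos rfl]
                omega
              · by_cases htj : t = j
                · subst htj
                  rw [hval (xv t), if_neg (fun h => hti (xv_inj h)), if_neg (xv_ne_yv t t),
                    if_pos rfl, hval (yv t), if_neg (yv_ne_xv t i), if_pos rfl]
                  have hxyj := hA.1 t
                  omega
                · rw [hval (xv t), if_neg (fun h => hti (xv_inj h)), if_neg (xv_ne_yv t j),
                    if_neg (fun h => htj (xv_inj h)), if_neg (xv_ne_yv t i),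
                    hval (yv t), if_neg (yv_ne_xv t i), if_neg (fun h => htj (yv_inj h)),
                    if_neg (yv_ne_xv t j), if_neg (fun h => hti (yv_inj h))]
                  omega
            · have hs := hA.2
              rw [hval (xv 0), hval (xv 1), hval (xv 2)]
              fin_cases i <;> fin_cases j <;>
                simp [xv, yv] at hij hj hdi' hs ⊢ <;> omega
          have heq : Mon k d - Mon k d' = (Mon k d - Mon k d'') - (Mon k d' - Mon k d'') := by
            ring
          rw [heq]
          exact sub_mem h1 hmem
      have hpos : 0 < d (xv 0) ∨ 0 < d (xv 1) ∨ 0 < d (xv 2) := by omega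
      rcases hpos with h | h | h
      · exact key 0 h
      · exact key 1 h
      · exact key 2 h


noncomputable def w : Fin 6 → (Fin 5 →₀ ℕ)
  | ⟨0, _⟩ => Finsupp.single 3 1 + Finsupp.single 0 1
  | ⟨1, _⟩ => Finsupp.single 3 1 + Finsupp.single 1 1
  | ⟨2, _⟩ => Finsupp.single 3 1 + Finsupp.single 2 1
  | ⟨3, _⟩ => Finsupp.single 4 1 + Finsupp.single 0 1
  | ⟨4, _⟩ => Finsupp.single 4 1 + Finsupp.single 1 1
  | ⟨5, _⟩ => Finsupp.single 4 1 + Finsupp.single 2 1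

lemma w0 : w 0 = Finsupp.single 3 1 + Finsupp.single 0 1 := rfl
lemma w1 : w 1 = Finsupp.single 3 1 + Finsupp.single 1 1 := rfl
lemma w2 : w 2 = Finsupp.single 3 1 + Finsupp.single 2 1 := rfl
lemma w3 : w 3 = Finsupp.single 4 1 + Finsupp.single 0 1 := rfl
lemma w4 : w 4 = Finsupp.single 4 1 + Finsupp.single 1 1 := rfl
lemma w5 : w 5 = Finsupp.single 4 1 + Finsupp.single 2 1 := rfl

noncomputable def T (d : Fin 6 →₀ ℕ) : Fin 5 →₀ ℕ := ∑ i : Fin 6, d i • w i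

noncomputable def g : Fin 6 → MvPolynomial (Fin 5) k := fun i => monomial (w i) 1

noncomputable def φ : MvPolynomial (Fin 6) k →ₐ[k] MvPolynomial (Fin 5) k := aeval (g k)

lemma prod_monomial {α : Type*} (s : Finset α) (f : α → (Fin 5 →₀ ℕ)) :
    (∏ i ∈ s, monomial (f i) (1 : k)) = monomial (∑ i ∈ s, f i) 1 := by
  classical
  induction s using Finset.induction_on with
  | empty => simp [monomial_zero']
  | insert _ _ h ih =>
      rw [Finset.prod_insert h, Finset.sum_insert h, ih, monomial_mul, one_mul]

lemma phi_monomial (d : Fin 6 →₀ ℕ) (c : k) :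
    φ k (monomial d c) = monomial (T d) c := by
  rw [φ, aeval_monomial]
  have : (d.prod fun i e => g k i ^ e) = monomial (T d) (1 : k) := by
    rw [Finsupp.prod_fintype _ _ (fun i => pow_zero _)]
    have : ∀ i : Fin 6, g k i ^ d i = monomial (d i • w i) (1 : k) := by
      intro i; rw [g, monomial_pow, one_pow]
    simp_rw [this]
    rw [prod_monomial, T]
  rw [this]
  rw [algebraMap_eq, C_mul_monomial, mul_one]

lemma T_eq_iff {d d' : Fin 6 →₀ ℕ} (h : T d = T d') :
    (d 0 + d 3 = d' 0 + d' 3) ∧ (d 1 + d 4 = d' 1 + d' 4) ∧ (d 2 + d 5 = d' 2 + d' 5) ∧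
    (d 0 + d 1 + d 2 = d' 0 + d' 1 + d' 2) := by
  have h0 := DFunLike.congr_fun h 0
  have h1 := DFunLike.congr_fun h 1
  have h2 := DFunLike.congr_fun h 2
  have h3 := DFunLike.congr_fun h 3
  simp [T, Fin.sum_univ_six, w0, w1, w2, w3, w4, w5, Finsupp.single_apply] at h0 h1 h2 h3
  refine ⟨by omega, by omega, by omega, by omega⟩


-- bridge between `monomial` and `Mon`
lemma monomial_eq_Mon (d : Fin 6 →₀ ℕ) : monomial d (1 : k) = Mon k ⇑d := by
  rw [monomial_eq, Mon, map_one, one_mul]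
  rw [Finsupp.prod_fintype _ _ (fun i => pow_zero _)]

lemma exchange' (d d' : Fin 6 →₀ ℕ) (h : T d = T d') :
    monomial d (1 : k) - monomial d' 1 ∈ I k := by
  obtain ⟨h0, h1, h2, h3⟩ := T_eq_iff h
  rw [monomial_eq_Mon, monomial_eq_Mon]
  apply exchange k (d (xv 0) + d (xv 1) + d (xv 2)) _ _ rfl
  refine ⟨fun t => ?_, ?_⟩
  · fin_cases t
    · exact h0
    · exact h1
    · exact h2
  · exact h3

lemma mem_I_of_phi_eq_zero :
    ∀ (n : ℕ) (f : MvPolynomial (Fin 6) k), f.support.card = n → φ k f = 0 → f ∈ I k := by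
  intro n
  induction n using Nat.strong_induction_on with
  | _ n IHn =>
    intro f hc hf
    by_cases h0 : f = 0
    · rw [h0]; exact zero_mem _
    · have hsupp : f.support.Nonempty :=
        Finset.nonempty_iff_ne_empty.mpr (fun h => h0 (support_eq_empty.mp h))
      obtain ⟨d, hd⟩ := hsupp
      have hcd : coeff d f ≠ 0 := mem_support_iff.mp hd
      -- the coefficient of `T d` in `φ f` is the sum of coefficients over the fiber
      have hco : ∑ e ∈ f.support.filter (fun e => T e = T d), coeff e f = 0 := by
        have h1 : coeff (T d) (φ k f) = ∑ e ∈ f.support, if T e = T d then coeff e f else 0 := by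
          conv_lhs => rw [← support_sum_monomial_coeff f]
          rw [map_sum, coeff_sum]
          refine Finset.sum_congr rfl (fun e _ => ?_)
          rw [phi_monomial, coeff_monomial]
        rw [Finset.sum_filter, ← h1, hf, coeff_zero]
      -- find a second monomial in the same fiber
      have hex : ∃ d' ∈ f.support, d' ≠ d ∧ T d' = T d := by
        by_contra hcontra
        push_neg at hcontra
        have hfil : f.support.filter (fun e => T e = T d) = {d} := by
          apply Finset.ext
          intro e
          simp only [Finset.mem_filter, Finset.mem_singleton]
          constructor
          · rintro ⟨he, hTe⟩
            by_contra hne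
            exact hcontra e he hne hTe
          · rintro rfl
            exact ⟨hd, rfl⟩
        rw [hfil, Finset.sum_singleton] at hco
        exact hcd hco
      obtain ⟨d', hd's, hne, hT⟩ := hex
      set c := coeff d f with hcdef
      set q : MvPolynomial (Fin 6) k := monomial d 1 - monomial d' 1 with hq
      have hqI : q ∈ I k := exchange' k d d' hT.symm
      have hφq : φ k q = 0 := by
        rw [hq, map_sub, phi_monomial, phi_monomial, hT, sub_self]
      set f' : MvPolynomial (Fin 6) k := f - C c * q with hf'
      have hφf' : φ k f' = 0 := by
        rw [hf', map_sub, map_mul, hφq, mul_zero, sub_zero, hf]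
      have hsub : f'.support ⊆ f.support.erase d := by
        intro e he
        have hce : coeff e f' ≠ 0 := mem_support_iff.mp he
        have hval : coeff e f' = coeff e f - c * (coeff e (monomial d (1:k)) -
            coeff e (monomial d' 1)) := by
          rw [hf', hq, coeff_sub, coeff_C_mul, coeff_sub]
        rw [Finset.mem_erase]
        constructor
        · rintro rfl
          rw [coeff_monomial, if_pos rfl, coeff_monomial, if_neg hne] at hval
          simp [hcdef] at hval
          exact hce hval
        · by_contra hef
          have h1 : coeff e f = 0 := notMem_support_iff.mp hef
          have h2 : e ≠ d' := fun h => hef (h ▸ hd's)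
          have h3 : e ≠ d := fun h => hef (h ▸ hd)
          rw [coeff_monomial, if_neg (fun h => h3 h.symm), coeff_monomial,
            if_neg (fun h => h2 h.symm), h1] at hval
          simp at hval
          exact hce hval
      have hcard : f'.support.card < n := by
        have h1 : f'.support.card ≤ (f.support.erase d).card := Finset.card_le_card hsub
        have h2 : (f.support.erase d).card < f.support.card := Finset.card_erase_lt_of_mem hd
        omega
      have hf'I : f' ∈ I k := IHn _ hcard f' rfl hφf'
      have : f = f' + C c * q := by rw [hf']; ring
      rw [this]
      exact add_mem hf'I (Ideal.mul_mem_left _ _ hqI)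

lemma I_eq_ker : I k = RingHom.ker (φ k).toRingHom := by
  apply le_antisymm
  · rw [I, Ideal.span_le]
    rintro p (rfl | rfl | rfl) <;>
      · simp only [SetLike.mem_coe, RingHom.mem_ker, AlgHom.toRingHom_eq_coe,
          RingHom.coe_coe, map_sub, map_mul, φ, aeval_X, g, monomial_mul, mul_one]
        rw [sub_eq_zero]
        congr 1
        simp only [w0, w1, w2, w3, w4, w5]
        abel_nf
  · intro f hf
    exact mem_I_of_phi_eq_zero k f.support.card f rfl hf

lemma I_isRadical : (I k).IsRadical := by
  rw [I_eq_ker]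
  exact (RingHom.ker_isPrime _).isRadical

end MinorsRadical

/-- The ideal of the `2×2` minors `(x₁y₂-x₂y₁, x₂y₃-x₃y₂, x₃y₁-x₁y₃)` in
`k[x₁,x₂,x₃,y₁,y₂,y₃]` (char 0) is radical. Variables `0,1,2` are `x₁,x₂,x₃`,
and `3,4,5` are `y₁,y₂,y₃`. -/
theorem minors_ideal_isRadical {k : Type*} [Field k] [CharZero k] :
    (Ideal.span ({X 0 * X 4 - X 1 * X 3,
                  X 1 * X 5 - X 2 * X 4,
                  X 2 * X 3 - X 0 * X 5} : Set (MvPolynomial (Fin 6) k))).IsRadical := by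
  exact MinorsRadical.I_isRadical k
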